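/- For t₁ + t₂ + t₃ = 1, the three formal partial derivatives of Σ(t₁,t₂,t₃) = Σᵢ tᵢ³(10 − 15tᵢ + 6tᵢ²) + 30(t₁²t₂²t₃ + t₂²t₃²t₁ + t₃²t₁²t₂) are all equal: ∂Σ/∂t₁ = ∂Σ/∂t₂ = ∂Σ/∂t₃ on the simplex {t₁+t₂+t₃=1}. -/

import Mathlib

/-- The polynomial Σ(t₁,t₂,t₃) = Σᵢ tᵢ³(10−15tᵢ+6tᵢ²) + 30(t₁²t₂²t₃ + t₂²t₃²t₁ + t₃²t₁²t₂). -/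
noncomputable def SigmaPoly (t₁ t₂ t₃ : ℝ) : ℝ :=
  t₁ ^ 3 * (10 - 15 * t₁ + 6 * t₁ ^ 2) + t₂ ^ 3 * (10 - 15 * t₂ + 6 * t₂ ^ 2) +
    t₃ ^ 3 * (10 - 15 * t₃ + 6 * t₃ ^ 2) +
    30 * (t₁ ^ 2 * t₂ ^ 2 * t₃ + t₂ ^ 2 * t₃ ^ 2 * t₁ + t₃ ^ 2 * t₁ ^ 2 * t₂)

lemma quintic_deriv (a b c x : ℝ) :
    HasDerivAt (fun s : ℝ => 6*s^5 - 15*s^4 + 10*s^3 + a*s^2 + b*s + c)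
      (30*x^4 - 60*x^3 + 30*x^2 + 2*a*x + b) x := by
  have h := (((((hasDerivAt_pow 5 x).const_mul 6).sub
      ((hasDerivAt_pow 4 x).const_mul 15)).add
      ((hasDerivAt_pow 3 x).const_mul 10)).add
      ((hasDerivAt_pow 2 x).const_mul a)).add
      (((hasDerivAt_id x).const_mul b).add_const c)
  convert h using 1 <;> try rfl
  · funext s; simp only [id_eq, Pi.add_apply, Pi.sub_apply]; ring
  · push_cast; ring

lemma poly_deriv_eq (a b c x : ℝ) (f : ℝ → ℝ)
    (hf : f = fun s : ℝ => 6*s^5 - 15*s^4 + 10*s^3 + a*s^2 + b*s + c) :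
    deriv f x = 30*x^4 - 60*x^3 + 30*x^2 + 2*a*x + b := by
  rw [hf]; exact (quintic_deriv a b c x).deriv

/-- On the simplex t₁+t₂+t₃ = 1 the three partial derivatives of Σ coincide. -/
theorem stmt6 (t₁ t₂ t₃ : ℝ) (h : t₁ + t₂ + t₃ = 1) :
    deriv (fun s => SigmaPoly s t₂ t₃) t₁ = deriv (fun s => SigmaPoly t₁ s t₃) t₂ ∧
    deriv (fun s => SigmaPoly t₁ s t₃) t₂ = deriv (fun s => SigmaPoly t₁ t₂ s) t₃ := by
  rw [poly_deriv_eq (30*(t₂^2*t₃+t₃^2*t₂)) (30*(t₂^2*t₃^2))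
      (t₂ ^ 3 * (10 - 15 * t₂ + 6 * t₂ ^ 2) + t₃ ^ 3 * (10 - 15 * t₃ + 6 * t₃ ^ 2)) t₁ _
      (by funext s; simp only [SigmaPoly]; ring),
    poly_deriv_eq (30*(t₁^2*t₃+t₃^2*t₁)) (30*(t₁^2*t₃^2))
      (t₁ ^ 3 * (10 - 15 * t₁ + 6 * t₁ ^ 2) + t₃ ^ 3 * (10 - 15 * t₃ + 6 * t₃ ^ 2)) t₂ _
      (by funext s; simp only [SigmaPoly]; ring),
    poly_deriv_eq (30*(t₁^2*t₂+t₂^2*t₁)) (30*(t₁^2*t₂^2))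
      (t₁ ^ 3 * (10 - 15 * t₁ + 6 * t₁ ^ 2) + t₂ ^ 3 * (10 - 15 * t₂ + 6 * t₂ ^ 2)) t₃ _
      (by funext s; simp only [SigmaPoly]; ring)]
  have h3 : t₃ = 1 - t₁ - t₂ := by linarith
  subst h3
  constructor <;> ring
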